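/- Suppose that for every (b,c) ∈ U at least one of P(b) and D(c) is nonempty. Then, as extended real numbers, the worst-case value p^+ equals the optimal value of the dual bilinear program: p^+ = sup{(b̂ + b)^T y : Â^T y + s = ĉ + c, s ≥ 0, (b,c) ∈ U}, where the supremum over an empty feasible set is −∞. -/

import Mathlib

open Matrix Finset

set_option linter.unusedSectionVars false
set_option linter.unusedVariables false


section FarkasInfra

variable {κ ι : Type*} [Fintype κ] [Fintype ι] [DecidableEq ι]

lemma mulVec_eq_sum_cols (A : Matrix κ ι ℝ) (x : ι → ℝ) :
    A *ᵥ x = ∑ i, x i • A.transpose i := by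
  ext j
  simp [mulVec, dotProduct, Finset.sum_apply, mul_comm]

/-- Conic Carathéodory: any nonnegative combination can be rewritten with a
linearly independent support. -/
lemma carath (A : Matrix κ ι ℝ) :
    ∀ (k : ℕ) (T : Finset ι) (x : ι → ℝ), 0 ≤ x → (∀ i ∉ T, x i = 0) → T.card ≤ k →
      ∃ (x' : ι → ℝ) (T' : Finset ι), 0 ≤ x' ∧ (∀ i ∉ T', x' i = 0) ∧
        A *ᵥ x' = A *ᵥ x ∧
        LinearIndependent ℝ (fun i : T' => A.transpose i.1) := by
  intro k
  induction k with
  | zero =>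
    intro T x hx0 hsupp hcard
    have hT : T = ∅ := Finset.card_eq_zero.mp (Nat.le_zero.mp hcard)
    subst hT
    refine ⟨x, ∅, hx0, hsupp, rfl, ?_⟩
    have : IsEmpty ((∅ : Finset ι) : Type _) := by
      constructor; rintro ⟨i, hi⟩; simp at hi
    exact linearIndependent_empty_type
  | succ k ih =>
    intro T x hx0 hsupp hcard
    by_cases hli : LinearIndependent ℝ (fun i : T => A.transpose i.1)
    · exact ⟨x, T, hx0, hsupp, rfl, hli⟩
    · classical
      obtain ⟨g, hgsum, i₀, hgi₀⟩ := Fintype.not_linearIndependent_iff.mp hli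
      -- extend g by zero
      have hexists : ∃ d : ι → ℝ, A *ᵥ d = 0 ∧ (∀ i ∉ T, d i = 0) ∧ ∃ i, 0 < d i := by
        set d : ι → ℝ := fun i => if h : i ∈ T then g ⟨i, h⟩ else 0 with hd
        have hdsupp : ∀ i ∉ T, d i = 0 := fun i hi => by simp [hd, hi]
        have hAd : A *ᵥ d = 0 := by
          rw [mulVec_eq_sum_cols]
          have h1 : ∑ i, d i • A.transpose i = ∑ i ∈ T, d i • A.transpose i := by
            refine (Finset.sum_subset T.subset_univ ?_).symm
            intro i _ hi; rw [hdsupp i hi, zero_smul]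
          rw [h1, ← Finset.sum_coe_sort T (fun i => d i • A.transpose i)]
          rw [← hgsum]
          refine Finset.sum_congr rfl fun i _ => ?_
          simp [hd, i.2]
        have hdi₀ : d i₀.1 ≠ 0 := by simpa [hd, i₀.2] using hgi₀
        rcases lt_or_gt_of_ne hdi₀ with hneg | hpos
        · refine ⟨-d, by rw [mulVec_neg, hAd, neg_zero], fun i hi => by simp [hdsupp i hi], ?_⟩
          exact ⟨i₀.1, by simpa using hneg⟩
        · exact ⟨d, hAd, hdsupp, ⟨i₀.1, hpos⟩⟩
      obtain ⟨d, hAd, hdsupp, ipos, hipos⟩ := hexists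
      set P : Finset ι := T.filter (fun i => 0 < d i) with hP
      have hPne : P.Nonempty := by
        refine ⟨ipos, Finset.mem_filter.mpr ⟨?_, hipos⟩⟩
        by_contra hc
        rw [hdsupp ipos hc] at hipos; exact lt_irrefl _ hipos
      obtain ⟨i₁, hi₁P, hi₁min⟩ := P.exists_mem_eq_inf' hPne (fun i => x i / d i)
      set t : ℝ := P.inf' hPne (fun i => x i / d i) with ht
      have hi₁T : i₁ ∈ T := (Finset.mem_filter.mp hi₁P).1
      have hdi₁ : 0 < d i₁ := (Finset.mem_filter.mp hi₁P).2
      have ht0 : 0 ≤ t := by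
        refine Finset.le_inf' hPne _ fun i hi => ?_
        exact div_nonneg (hx0 i) (Finset.mem_filter.mp hi).2.le
      set x' : ι → ℝ := fun i => x i - t * d i with hx'
      have hx'0 : 0 ≤ x' := by
        intro i
        have hxi := hx0 i
        simp only [Pi.zero_apply] at hxi
        rcases le_or_gt (d i) 0 with hdi | hdi
        · have h1 : t * d i ≤ 0 := mul_nonpos_of_nonneg_of_nonpos ht0 hdi
          show (0:ℝ) ≤ x i - t * d i
          linarith
        · have hiP : i ∈ P := by
            refine Finset.mem_filter.mpr ⟨?_, hdi⟩
            by_contra hc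
            rw [hdsupp i hc] at hdi; exact lt_irrefl _ hdi
          have hle : t ≤ x i / d i := Finset.inf'_le _ hiP
          have h1 : t * d i ≤ x i := by
            rw [le_div_iff₀ hdi] at hle; linarith
          show (0:ℝ) ≤ x i - t * d i
          linarith
      have hAx' : A *ᵥ x' = A *ᵥ x := by
        have : x' = x - t • d := rfl
        rw [this, mulVec_sub, mulVec_smul A t d, hAd, smul_zero, sub_zero]
      have hsupp' : ∀ i ∉ T.erase i₁, x' i = 0 := by
        intro i hi
        rw [Finset.mem_erase] at hi
        push_neg at hi
        by_cases hiT : i ∈ T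
        · have : i = i₁ := by
            by_contra hne
            exact (hi hne) hiT
          subst this
          have : t = x i / d i := hi₁min
          simp only [hx']
          rw [this]
          field_simp
          ring
        · simp only [hx', hsupp i hiT, hdsupp i hiT, mul_zero, sub_zero]
      have hcard' : (T.erase i₁).card ≤ k := by
        have := Finset.card_erase_of_mem hi₁T
        omega
      obtain ⟨x'', T'', h1, h2, h3, h4⟩ := ih (T.erase i₁) x' hx'0 hsupp' hcard'
      exact ⟨x'', T'', h1, h2, h3.trans hAx', h4⟩

lemma coneOn_isClosed (A : Matrix κ ι ℝ) (T : Finset ι)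
    (hT : LinearIndependent ℝ (fun i : T => A.transpose i.1)) :
    IsClosed {z : κ → ℝ | ∃ x, 0 ≤ x ∧ (∀ i ∉ T, x i = 0) ∧ A *ᵥ x = z} := by
  classical
  set f : (↥T → ℝ) →ₗ[ℝ] (κ → ℝ) :=
    A.mulVecLin ∘ₗ Function.ExtendByZero.linearMap ℝ (Subtype.val : T → ι) with hf
  have hlinmap : ∀ y : ↥T → ℝ, (Function.ExtendByZero.linearMap ℝ (Subtype.val : ↥T → ι)) y
      = Function.extend Subtype.val y (0 : ι → ℝ) := fun _ => rfl
  have hext0 : ∀ (y : ↥T → ℝ) (i : ι), i ∉ T →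
      Function.extend Subtype.val y (0 : ι → ℝ) i = 0 := by
    intro y i hi
    rw [Function.extend_apply']
    · rfl
    · rintro ⟨a, rfl⟩; exact hi a.2
  have hextmem : ∀ (y : ↥T → ℝ) (i : T),
      Function.extend Subtype.val y (0 : ι → ℝ) i.1 = y i := fun y i =>
    Subtype.val_injective.extend_apply y _ i
  have hfy : ∀ y : ↥T → ℝ, f y = ∑ i : T, y i • A.transpose i.1 := by
    intro y
    simp only [hf, LinearMap.comp_apply, mulVecLin_apply, hlinmap]
    rw [mulVec_eq_sum_cols,
      ← Finset.sum_subset T.subset_univ (fun i _ hi => by rw [hext0 y i hi, zero_smul]),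
      ← Finset.sum_coe_sort T (fun i => Function.extend Subtype.val y (0 : ι → ℝ) i • A.transpose i)]
    exact Finset.sum_congr rfl fun i _ => by rw [hextmem]
  have hker : LinearMap.ker f = ⊥ := by
    rw [LinearMap.ker_eq_bot']
    intro y hy
    rw [hfy] at hy
    have := Fintype.linearIndependent_iff.mp hT y hy
    funext i; exact this i
  have himg : {z : κ → ℝ | ∃ x, 0 ≤ x ∧ (∀ i ∉ T, x i = 0) ∧ A *ᵥ x = z}
      = f '' (Set.Ici 0) := by
    ext z
    constructor
    · rintro ⟨x, hx0, hsupp, rfl⟩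
      refine ⟨fun i => x i.1, fun i => hx0 i.1, ?_⟩
      have hx : Function.extend Subtype.val (fun i : T => x i.1) (0 : ι → ℝ) = x := by
        funext i
        by_cases hi : i ∈ T
        · exact hextmem _ ⟨i, hi⟩
        · rw [hext0 _ i hi, hsupp i hi]
      simp only [hf, LinearMap.comp_apply, mulVecLin_apply, hlinmap, hx]
    · rintro ⟨y, hy, rfl⟩
      refine ⟨Function.extend Subtype.val y (0 : ι → ℝ), ?_, ?_, rfl⟩
      · intro i
        by_cases hi : i ∈ T
        · rw [show i = (⟨i, hi⟩ : T).1 from rfl, hextmem]; exact hy ⟨i, hi⟩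
        · simp [hext0 y i hi]
      · intro i hi; exact hext0 y i hi
  rw [himg]
  exact (f.isClosedEmbedding_of_injective hker).isClosedMap _ isClosed_Ici

lemma coneSet_isClosed (A : Matrix κ ι ℝ) :
    IsClosed {z : κ → ℝ | ∃ x, 0 ≤ x ∧ A *ᵥ x = z} := by
  classical
  have hunion : {z : κ → ℝ | ∃ x, 0 ≤ x ∧ A *ᵥ x = z} =
      ⋃ T ∈ {T : Finset ι | LinearIndependent ℝ (fun i : T => A.transpose i.1)},
        {z : κ → ℝ | ∃ x, 0 ≤ x ∧ (∀ i ∉ T, x i = 0) ∧ A *ᵥ x = z} := by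
    ext z
    simp only [Set.mem_setOf_eq, Set.mem_iUnion, exists_prop]
    constructor
    · rintro ⟨x, hx0, rfl⟩
      obtain ⟨x', T', h1, h2, h3, h4⟩ :=
        carath A (Finset.univ.card) Finset.univ x hx0 (fun i hi => absurd (Finset.mem_univ i) hi)
          le_rfl
      exact ⟨T', h4, x', h1, h2, h3⟩
    · rintro ⟨T, _, x, hx0, _, rfl⟩
      exact ⟨x, hx0, rfl⟩
  rw [hunion]
  exact (Set.toFinite _).isClosed_biUnion fun T hT => coneOn_isClosed A T hT

/-- Farkas' lemma. -/
theorem farkas_lemma (A : Matrix κ ι ℝ) (b : κ → ℝ)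
    (h : ¬ ∃ x : ι → ℝ, 0 ≤ x ∧ A *ᵥ x = b) :
    ∃ y : κ → ℝ, A.transpose *ᵥ y ≤ 0 ∧ 0 < b ⬝ᵥ y := by
  classical
  set e : EuclideanSpace ℝ κ ≃L[ℝ] (κ → ℝ) := EuclideanSpace.equiv κ ℝ with he
  set K₀ : ConvexCone ℝ (κ → ℝ) :=
    { carrier := {z : κ → ℝ | ∃ x, 0 ≤ x ∧ A *ᵥ x = z}
      smul_mem' := by
        rintro c hc z ⟨x, hx, rfl⟩
        exact ⟨c • x, smul_nonneg hc.le hx, mulVec_smul _ _ _⟩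
      add_mem' := by
        rintro z ⟨x, hx, rfl⟩ w ⟨x', hx', rfl⟩
        exact ⟨x + x', add_nonneg hx hx', mulVec_add _ _ _⟩ } with hK₀
  set K : ConvexCone ℝ (EuclideanSpace ℝ κ) := K₀.map (e.symm : (κ → ℝ) →ₗ[ℝ] EuclideanSpace ℝ κ)
    with hK
  have hKcar : (K : Set (EuclideanSpace ℝ κ)) = ⇑e.symm '' (K₀ : Set (κ → ℝ)) := by
    simp [hK, ConvexCone.map]
  have hne : (K : Set (EuclideanSpace ℝ κ)).Nonempty := by
    rw [hKcar]
    exact ⟨e.symm 0, ⟨0, ⟨0, le_refl _, mulVec_zero _⟩, rfl⟩⟩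
  have hcl : IsClosed (K : Set (EuclideanSpace ℝ κ)) := by
    rw [hKcar]
    exact (e.symm.toHomeomorph.isClosedMap) _ (coneSet_isClosed A)
  have hb : e.symm b ∉ K := by
    intro hmem
    obtain ⟨z, hz, hzb⟩ := ConvexCone.mem_map.mp hmem
    have : z = b := e.symm.injective hzb
    subst this
    exact h hz
  have hpt : K.Pointed := by
    have h0 : e.symm 0 ∈ K := ConvexCone.mem_map.mpr ⟨0, ⟨0, le_refl _, mulVec_zero _⟩, rfl⟩
    have h1 : (0 : EuclideanSpace ℝ κ) ∈ K := by simpa using h0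
    exact h1
  obtain ⟨y, hy1, hy2⟩ := ProperCone.hyperplane_separation'
    ({ toSubmodule := K.toPointedCone hpt, isClosed' := hcl } : ProperCone ℝ (EuclideanSpace ℝ κ))
    (x₀ := e.symm b) hb
  have hinner : ∀ v : κ → ℝ, (inner ℝ (e.symm v) y : ℝ) = v ⬝ᵥ (e y) := by
    intro v
    rw [PiLp.inner_apply]
    simp [dotProduct, RCLike.inner_apply]
    exact Finset.sum_congr rfl fun i _ => mul_comm _ _
  have hinner2 : (inner ℝ y (e.symm b) : ℝ) = b ⬝ᵥ (e y) := by
    rw [real_inner_comm]; exact hinner b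
  set y₀ : κ → ℝ := e y with hy₀
  have hAx : ∀ x : ι → ℝ, 0 ≤ x → 0 ≤ (A *ᵥ x) ⬝ᵥ y₀ := by
    intro x hx
    have hm : e.symm (A *ᵥ x) ∈ K :=
      ConvexCone.mem_map.mpr ⟨A *ᵥ x, ⟨x, hx, rfl⟩, rfl⟩
    have := hy1 _ hm
    rwa [hinner] at this
  have hbneg : b ⬝ᵥ y₀ < 0 := by rw [← hinner2, real_inner_comm]; exact hy2
  refine ⟨-y₀, ?_, ?_⟩
  · intro i
    have hsingle : (0 : ι → ℝ) ≤ Pi.single i 1 := Pi.single_nonneg.mpr zero_le_one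
    have h1 := hAx (Pi.single i 1) hsingle
    have h2 : (A *ᵥ Pi.single i 1) ⬝ᵥ y₀ = (A.transpose *ᵥ y₀) i := by
      rw [mulVec_single_one]
      rfl
    rw [h2] at h1
    simp only [mulVec_neg, Pi.neg_apply, Pi.zero_apply]
    linarith
  · rw [dotProduct_neg]
    linarith

end FarkasInfra


section Duality

variable {m n : ℕ}


lemma lp_weak_duality (A : Matrix (Fin m) (Fin n) ℝ) (bb : Fin m → ℝ) (cc : Fin n → ℝ)
    {x : Fin n → ℝ} {y : Fin m → ℝ} {s : Fin n → ℝ}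
    (hAx : A *ᵥ x = bb) (hx0 : 0 ≤ x) (hys : A.transpose *ᵥ y + s = cc) (hs0 : 0 ≤ s) :
    bb ⬝ᵥ y ≤ cc ⬝ᵥ x := by
  have h1 : bb ⬝ᵥ y = (A.transpose *ᵥ y) ⬝ᵥ x := by
    rw [← hAx, dotProduct_comm, dotProduct_mulVec, ← mulVec_transpose]
  have h2 : A.transpose *ᵥ y = cc - s := by rw [← hys]; abel
  have h3 : (0:ℝ) ≤ s ⬝ᵥ x :=
    Finset.sum_nonneg fun i _ => mul_nonneg (hs0 i) (hx0 i)
  rw [h1, h2, sub_dotProduct]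
  linarith

/-- If the dual is feasible and no primal point has value `≤ γ`, then the dual
has a feasible point with value `≥ γ`. -/
lemma lp_key (A : Matrix (Fin m) (Fin n) ℝ) (bb : Fin m → ℝ) (cc : Fin n → ℝ)
    (hD : ∃ y s, A.transpose *ᵥ y + s = cc ∧ 0 ≤ s) (γ : ℝ)
    (hγ : ∀ x : Fin n → ℝ, A *ᵥ x = bb → 0 ≤ x → ¬ (cc ⬝ᵥ x ≤ γ)) :
    ∃ y s, A.transpose *ᵥ y + s = cc ∧ 0 ≤ s ∧ γ ≤ bb ⬝ᵥ y := by
  classical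
  set A' : Matrix (Fin m ⊕ Unit) (Fin n ⊕ Unit) ℝ :=
    Matrix.fromBlocks A 0 (Matrix.of fun (_ : Unit) j => cc j) 1 with hA'
  have h' : ¬ ∃ z, 0 ≤ z ∧ A' *ᵥ z = Sum.elim bb (fun _ => γ) := by
    rintro ⟨z, hz0, hz⟩
    rw [hA', fromBlocks_mulVec] at hz
    have hAx : A *ᵥ (z ∘ Sum.inl) = bb := by
      funext i
      have := congrFun hz (Sum.inl i)
      simpa using this
    have hct : cc ⬝ᵥ (z ∘ Sum.inl) + z (Sum.inr ()) = γ := by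
      have := congrFun hz (Sum.inr ())
      simpa [Matrix.mulVec, dotProduct] using this
    have hz1 : 0 ≤ z (Sum.inr ()) := hz0 (Sum.inr ())
    exact hγ (z ∘ Sum.inl) hAx (fun i => hz0 (Sum.inl i)) (by linarith)
  obtain ⟨w, hw1, hw2⟩ := farkas_lemma A' _ h'
  set y₁ : Fin m → ℝ := w ∘ Sum.inl with hy₁
  set τ : ℝ := w (Sum.inr ()) with hτdef
  have hineq : ∀ j, (A.transpose *ᵥ y₁) j + τ * cc j ≤ 0 := by
    intro j
    have := hw1 (Sum.inl j)
    rw [hA', fromBlocks_transpose, fromBlocks_mulVec] at this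
    simp only [Sum.elim_inl, Pi.add_apply, Pi.zero_apply] at this
    have hcol : ((Matrix.of fun (_ : Unit) j => cc j).transpose *ᵥ (w ∘ Sum.inr)) j
        = cc j * τ := by
      simp [Matrix.mulVec, dotProduct, hτdef]
    rw [hcol] at this
    linarith [this]
  have hτ : τ ≤ 0 := by
    have := hw1 (Sum.inr ())
    rw [hA', fromBlocks_transpose, fromBlocks_mulVec] at this
    simpa [Matrix.mulVec, dotProduct] using this
  have hobj : 0 < bb ⬝ᵥ y₁ + γ * τ := by
    have h2 : Sum.elim bb (fun _ => γ) ⬝ᵥ w = bb ⬝ᵥ y₁ + γ * τ := by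
      simp [dotProduct, Fintype.sum_sum_type, hy₁, hτdef]
    rw [h2] at hw2
    exact hw2
  rcases eq_or_lt_of_le hτ with hτ0 | hτneg
  · -- τ = 0 : dual unbounded direction
    obtain ⟨y₀, s₀, hfeas₀, hs₀⟩ := hD
    have hby₁ : 0 < bb ⬝ᵥ y₁ := by
      rw [hτ0] at hobj
      simpa using hobj
    have hneg : ∀ j, (A.transpose *ᵥ y₁) j ≤ 0 := by
      intro j
      have := hineq j
      rw [hτ0] at this
      linarith
    set lam : ℝ := max 0 ((γ - bb ⬝ᵥ y₀) / (bb ⬝ᵥ y₁)) with hlam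
    have hlam0 : 0 ≤ lam := le_max_left _ _
    refine ⟨y₀ + lam • y₁, s₀ - lam • (A.transpose *ᵥ y₁), ?_, ?_, ?_⟩
    · rw [mulVec_add, mulVec_smul]
      rw [← hfeas₀]
      abel
    · intro j
      have h1 := hs₀ j
      have h2 := hneg j
      simp only [Pi.sub_apply, Pi.smul_apply, smul_eq_mul, Pi.zero_apply] at *
      nlinarith
    · rw [dotProduct_add, dotProduct_smul]
      have h1 : (γ - bb ⬝ᵥ y₀) / (bb ⬝ᵥ y₁) ≤ lam := le_max_right _ _
      rw [div_le_iff₀ hby₁] at h1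
      simp only [smul_eq_mul]
      linarith
  · -- τ < 0 : rescale
    have hpos : 0 < -τ := by linarith
    set y : Fin m → ℝ := (-τ)⁻¹ • y₁ with hy
    refine ⟨y, cc - A.transpose *ᵥ y, by abel, ?_, ?_⟩
    · intro j
      have h1 := hineq j
      have h2 : (A.transpose *ᵥ y) j = (-τ)⁻¹ * (A.transpose *ᵥ y₁) j := by
        rw [hy, mulVec_smul]
        simp
      have h3 : (A.transpose *ᵥ y₁) j ≤ (-τ) * cc j := by linarith
      have h4 : (-τ)⁻¹ * (A.transpose *ᵥ y₁) j ≤ (-τ)⁻¹ * ((-τ) * cc j) :=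
        mul_le_mul_of_nonneg_left h3 (inv_nonneg.mpr hpos.le)
      have h5 : (-τ)⁻¹ * ((-τ) * cc j) = cc j := by
        rw [← mul_assoc, inv_mul_cancel₀ hpos.ne', one_mul]
      simp only [Pi.sub_apply, Pi.zero_apply]
      rw [h2]
      linarith
    · have h1 : bb ⬝ᵥ y = (-τ)⁻¹ * (bb ⬝ᵥ y₁) := by
        rw [hy, dotProduct_smul]
        simp
      have h2 : γ * (-τ) ≤ bb ⬝ᵥ y₁ := by nlinarith
      have h3 : (-τ)⁻¹ * (γ * (-τ)) ≤ (-τ)⁻¹ * (bb ⬝ᵥ y₁) :=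
        mul_le_mul_of_nonneg_left h2 (inv_nonneg.mpr hpos.le)
      have h4 : (-τ)⁻¹ * (γ * (-τ)) = γ := by
        rw [mul_comm γ (-τ), ← mul_assoc, inv_mul_cancel₀ hpos.ne', one_mul]
      rw [h1]
      linarith

/-- If the dual is infeasible and the primal is feasible, the primal is unbounded below. -/
lemma lp_primal_unbounded (A : Matrix (Fin m) (Fin n) ℝ) (bb : Fin m → ℝ) (cc : Fin n → ℝ)
    (hD : ¬ ∃ y s, A.transpose *ᵥ y + s = cc ∧ 0 ≤ s)
    (x₀ : Fin n → ℝ) (hx₀1 : A *ᵥ x₀ = bb) (hx₀2 : 0 ≤ x₀) (γ : ℝ) :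
    ∃ x, A *ᵥ x = bb ∧ 0 ≤ x ∧ cc ⬝ᵥ x ≤ γ := by
  classical
  set B : Matrix (Fin n) ((Fin m ⊕ Fin m) ⊕ Fin n) ℝ :=
    Matrix.fromCols (Matrix.fromCols A.transpose (-A.transpose)) 1 with hBdef
  have hB : ¬ ∃ z, 0 ≤ z ∧ B *ᵥ z = cc := by
    rintro ⟨z, hz0, hz⟩
    apply hD
    have hzdecomp : z = Sum.elim (Sum.elim (z ∘ Sum.inl ∘ Sum.inl) (z ∘ Sum.inl ∘ Sum.inr))
        (z ∘ Sum.inr) := by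
      funext i
      rcases i with (i | i) | i <;> rfl
    rw [hzdecomp, hBdef, fromCols_mulVec_sumElim, fromCols_mulVec_sumElim] at hz
    refine ⟨(z ∘ Sum.inl ∘ Sum.inl) - (z ∘ Sum.inl ∘ Sum.inr), z ∘ Sum.inr, ?_,
      fun j => hz0 (Sum.inr j)⟩
    rw [mulVec_sub]
    rw [neg_mulVec, one_mulVec] at hz
    rw [← hz]
    abel
  obtain ⟨w, hw1, hw2⟩ := farkas_lemma B cc hB
  have hBT : B.transpose *ᵥ w = Sum.elim (Sum.elim (A *ᵥ w) (-(A *ᵥ w))) w := by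
    rw [hBdef, transpose_fromCols, transpose_fromCols, fromRows_mulVec, fromRows_mulVec]
    rw [transpose_transpose, transpose_neg, transpose_transpose, neg_mulVec, transpose_one,
      one_mulVec]
  rw [hBT] at hw1
  have hAw : A *ᵥ w = 0 := by
    funext k
    have h1 := hw1 (Sum.inl (Sum.inl k))
    have h2 := hw1 (Sum.inl (Sum.inr k))
    simp only [Sum.elim_inl, Sum.elim_inr, Pi.neg_apply, Pi.zero_apply] at h1 h2
    have : (A *ᵥ w) k = 0 := le_antisymm h1 (by linarith)
    exact this
  have hw0 : w ≤ 0 := fun j => hw1 (Sum.inr j)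
  set u : (Fin n → ℝ) := -w with hu
  have hu0 : 0 ≤ u := fun j => by
    simp only [hu, Pi.neg_apply, Pi.zero_apply]
    have := hw0 j
    simpa using this
  have hAu : A *ᵥ u = 0 := by rw [hu, mulVec_neg, hAw, neg_zero]
  have hcu : cc ⬝ᵥ u < 0 := by
    rw [hu, dotProduct_neg]
    linarith
  set lam : ℝ := max 0 ((γ - cc ⬝ᵥ x₀) / (cc ⬝ᵥ u)) with hlam
  have hlam0 : 0 ≤ lam := le_max_left _ _
  refine ⟨x₀ + lam • u, ?_, ?_, ?_⟩
  · rw [mulVec_add, mulVec_smul, hAu, smul_zero, add_zero, hx₀1]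
  · exact add_nonneg hx₀2 (smul_nonneg hlam0 hu0)
  · rw [dotProduct_add, dotProduct_smul]
    have h1 : lam * (cc ⬝ᵥ u) ≤ ((γ - cc ⬝ᵥ x₀) / (cc ⬝ᵥ u)) * (cc ⬝ᵥ u) :=
      mul_le_mul_of_nonpos_right (le_max_right _ _) hcu.le
    have h2 : ((γ - cc ⬝ᵥ x₀) / (cc ⬝ᵥ u)) * (cc ⬝ᵥ u) = γ - cc ⬝ᵥ x₀ :=
      div_mul_cancel₀ _ hcu.ne
    simp only [smul_eq_mul]
    linarith


end Duality





/-- The perturbed primal feasible set `P(b) = {x : Âx = b̂ + b, x ≥ 0}`. -/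
def Pfeas (m n : ℕ) (Ahat : Matrix (Fin m) (Fin n) ℝ) (bhat b : Fin m → ℝ) :
    Set (Fin n → ℝ) :=
  {x | Ahat.mulVec x = bhat + b ∧ 0 ≤ x}

/-- The perturbed dual feasible set `D(c) = {(y,s) : Âᵀy + s = ĉ + c, s ≥ 0}`. -/
def Dfeas (m n : ℕ) (Ahat : Matrix (Fin m) (Fin n) ℝ) (chat c : Fin n → ℝ) :
    Set ((Fin m → ℝ) × (Fin n → ℝ)) :=
  {ys | Ahat.transpose.mulVec ys.1 + ys.2 = chat + c ∧ 0 ≤ ys.2}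

/-- The perturbed optimal value `p(b,c)` as an extended real number
(`sInf ∅ = +∞` in `EReal`). -/
noncomputable def pval (m n : ℕ) (Ahat : Matrix (Fin m) (Fin n) ℝ)
    (bhat b : Fin m → ℝ) (chat c : Fin n → ℝ) : EReal :=
  sInf ((fun x => (((chat + c) ⬝ᵥ x : ℝ) : EReal)) '' Pfeas m n Ahat bhat b)

/-- Under Assumption 1 (the uncertainty set `U` is compact,
convex, and contains `(0,0)`), if for every `(b,c) ∈ U` at least one of `P(b)`
and `D(c)` is nonempty, then the worst-case value `p⁺ = sup{p(b,c) : (b,c) ∈ U}`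
equals the optimal value of the collapsed dual bilinear program
`sup{(b̂+b)ᵀy : Âᵀy + s = ĉ+c, s ≥ 0, (b,c) ∈ U}`, as extended real numbers
(`sSup ∅ = −∞` in `EReal`). -/
theorem worst_case_collapsed_dual_formulation (m n : ℕ)
    (Ahat : Matrix (Fin m) (Fin n) ℝ) (bhat : Fin m → ℝ) (chat : Fin n → ℝ)
    (U : Set ((Fin m → ℝ) × (Fin n → ℝ)))
    (hUcompact : IsCompact U) (hUconvex : Convex ℝ U) (hU0 : (0, 0) ∈ U)
    (hPD : ∀ bc ∈ U, (Pfeas m n Ahat bhat bc.1).Nonempty ∨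
      (Dfeas m n Ahat chat bc.2).Nonempty) :
    sSup ((fun bc => pval m n Ahat bhat bc.1 chat bc.2) '' U) =
      sSup {e : EReal | ∃ b c y s, (b, c) ∈ U ∧
        Ahat.transpose.mulVec y + s = chat + c ∧ 0 ≤ s ∧
        e = (((bhat + b) ⬝ᵥ y : ℝ) : EReal)} := by
  apply le_antisymm
  · refine sSup_le ?_
    rintro e ⟨⟨b, c⟩, hbc, rfl⟩
    by_cases hD : ∃ y s, Ahat.transpose *ᵥ y + s = chat + c ∧ 0 ≤ s
    · rw [← EReal.ge_of_forall_gt_iff_ge]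
      intro z hz
      have hγ : ∀ x : Fin n → ℝ, Ahat *ᵥ x = bhat + b → 0 ≤ x →
          ¬ ((chat + c) ⬝ᵥ x ≤ z) := by
        intro x hx1 hx2 hle
        have hmem : (((chat + c) ⬝ᵥ x : ℝ) : EReal) ∈
            (fun x => (((chat + c) ⬝ᵥ x : ℝ) : EReal)) '' Pfeas m n Ahat bhat b :=
          ⟨x, ⟨hx1, hx2⟩, rfl⟩
        have h1 : pval m n Ahat bhat b chat c ≤ (((chat + c) ⬝ᵥ x : ℝ) : EReal) :=
          sInf_le hmem
        have h2 : (((chat + c) ⬝ᵥ x : ℝ) : EReal) ≤ (z : EReal) :=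
          EReal.coe_le_coe_iff.mpr hle
        have := lt_of_lt_of_le hz (h1.trans h2)
        exact lt_irrefl _ this
      obtain ⟨y, s, hfeas, hs, hval⟩ := lp_key Ahat (bhat + b) (chat + c) hD z hγ
      calc (z : EReal) ≤ (((bhat + b) ⬝ᵥ y : ℝ) : EReal) := EReal.coe_le_coe_iff.mpr hval
        _ ≤ _ := le_sSup (show _ ∈ {e : EReal | ∃ b c y s, (b, c) ∈ U ∧
            Ahat.transpose.mulVec y + s = chat + c ∧ 0 ≤ s ∧
            e = (((bhat + b) ⬝ᵥ y : ℝ) : EReal)} from ⟨b, c, y, s, hbc, hfeas, hs, rfl⟩)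
    · rcases hPD (b, c) hbc with hP | hD'
      · obtain ⟨x₀, hx₀1, hx₀2⟩ := hP
        have hbot : pval m n Ahat bhat b chat c = ⊥ := by
          refine le_bot_iff.mp ?_
          rw [← EReal.le_of_forall_lt_iff_le]
          intro z _
          obtain ⟨x, hx1, hx2, hx3⟩ :=
            lp_primal_unbounded Ahat (bhat + b) (chat + c) hD x₀ hx₀1 hx₀2 z
          exact sInf_le_of_le ⟨x, ⟨hx1, hx2⟩, rfl⟩ (EReal.coe_le_coe_iff.mpr hx3)
        simp only [hbot]
        exact bot_le
      · exact absurd ⟨hD'.choose.1, hD'.choose.2, hD'.choose_spec.1, hD'.choose_spec.2⟩ hD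
  · refine sSup_le ?_
    rintro e ⟨b, c, y, s, hU, hfeas, hs, rfl⟩
    have h1 : (((bhat + b) ⬝ᵥ y : ℝ) : EReal) ≤ pval m n Ahat bhat b chat c := by
      refine le_sInf ?_
      rintro e' ⟨x, ⟨hx1, hx2⟩, rfl⟩
      exact EReal.coe_le_coe_iff.mpr (lp_weak_duality Ahat (bhat + b) (chat + c) hx1 hx2 hfeas hs)
    exact h1.trans (le_sSup ⟨(b, c), hU, rfl⟩)
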